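/- Let A be a Hermitian n × n matrix and S, T ⊆ {1,…,n} with |S ∩ T| = |S| − 1 = |T| − 1. Then det(A[S∪T]) det(A[S∩T]) ≤ det(A[S]) det(A[T]). -/

import Mathlib

open Matrix

/-- The principal submatrix of `A` with rows and columns indexed by `S`. -/
def principalSub {ι : Type*} (A : Matrix ι ι ℂ) (S : Finset ι) : Matrix S S ℂ :=
  A.submatrix Subtype.val Subtype.val

namespace Stmt18Aux

variable {κ : Type*} [Fintype κ] [DecidableEq κ]

/-- The embedding `κ ⊕ Unit → κ ⊕ Fin 2` keeping the distinguished index `k`. -/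
def g (k : Fin 2) : κ ⊕ Unit → κ ⊕ Fin 2 := Sum.elim Sum.inl (fun _ => Sum.inr k)

omit [Fintype κ] [DecidableEq κ] in
lemma g_injective (k : Fin 2) : Function.Injective (g (κ := κ) k) := by
  rintro (x | ⟨⟩) (y | ⟨⟩) h
  · simp only [g, Sum.elim_inl, Sum.inl.injEq] at h
    exact congrArg _ h
  · simp [g] at h
  · simp [g] at h
  · rfl

lemma dj_aux (M : Matrix (κ ⊕ Fin 2) (κ ⊕ Fin 2) ℂ)
    (h : IsUnit (M.submatrix Sum.inl Sum.inl).det) :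
    M.det * (M.submatrix Sum.inl Sum.inl).det =
      (M.submatrix (g 0) (g 0)).det * (M.submatrix (g 1) (g 1)).det -
        (M.submatrix (g 0) (g 1)).det * (M.submatrix (g 1) (g 0)).det := by
  have hAB : M.toBlocks₁₁ = M.submatrix Sum.inl Sum.inl := rfl
  haveI : Invertible M.toBlocks₁₁ := invertibleOfIsUnitDet _ (hAB ▸ h)
  set A := M.toBlocks₁₁ with hA
  set E : Matrix (Fin 2) (Fin 2) ℂ := M.toBlocks₂₂ - M.toBlocks₂₁ * ⅟A * M.toBlocks₁₂ with hE
  have hM : M.det = A.det * E.det := by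
    conv_lhs => rw [← fromBlocks_toBlocks M]
    rw [det_fromBlocks₁₁]
  have hsub : ∀ a b : Fin 2, (M.submatrix (g a) (g b)).det = A.det * E a b := by
    intro a b
    have heq : M.submatrix (g a) (g b) =
        fromBlocks A (Matrix.of fun k (_ : Unit) => M (Sum.inl k) (Sum.inr b))
          (Matrix.of fun (_ : Unit) k => M (Sum.inr a) (Sum.inl k))
          (Matrix.of fun (_ : Unit) (_ : Unit) => M (Sum.inr a) (Sum.inr b)) := by
      ext x y
      rcases x with x | x <;> rcases y with y | y <;> rfl
    rw [heq, det_fromBlocks₁₁]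
    congr 1
    rw [det_unique]
    simp only [hE, Matrix.sub_apply, Matrix.mul_apply, Matrix.of_apply,
      Matrix.toBlocks₁₁, Matrix.toBlocks₁₂, Matrix.toBlocks₂₁, Matrix.toBlocks₂₂]
  rw [hM, Matrix.det_fin_two E, hsub, hsub, hsub, hsub, ← hAB]
  ring

lemma eval_charpoly_neg (A : Matrix κ κ ℂ) (t : ℂ) :
    ((-A).charpoly).eval t = (A + t • 1).det := by
  rw [Matrix.charpoly, ← Polynomial.coe_evalRingHom, RingHom.map_det]
  congr 1
  ext x y
  by_cases hxy : x = y
  · subst hxy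
    simp [charmatrix_apply_eq, Matrix.one_apply_eq]
    ring
  · simp [charmatrix_apply_ne _ _ _ hxy, Matrix.one_apply_ne hxy]

lemma dj (M : Matrix (κ ⊕ Fin 2) (κ ⊕ Fin 2) ℂ) :
    M.det * (M.submatrix Sum.inl Sum.inl).det =
      (M.submatrix (g 0) (g 0)).det * (M.submatrix (g 1) (g 1)).det -
        (M.submatrix (g 0) (g 1)).det * (M.submatrix (g 1) (g 0)).det := by
  set N : ℂ → Matrix (κ ⊕ Fin 2) (κ ⊕ Fin 2) ℂ := fun t => M + t • 1 with hN
  have hNcont : Continuous N := by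
    exact continuous_const.add (continuous_id.smul continuous_const)
  set F : ℂ → ℂ := fun t => (N t).det * ((N t).submatrix Sum.inl Sum.inl).det with hF
  set G : ℂ → ℂ := fun t =>
      ((N t).submatrix (g 0) (g 0)).det * ((N t).submatrix (g 1) (g 1)).det -
        ((N t).submatrix (g 0) (g 1)).det * ((N t).submatrix (g 1) (g 0)).det with hG
  have hFc : Continuous F := ((hNcont.matrix_det).mul
    ((hNcont.matrix_submatrix _ _).matrix_det))
  have hGc : Continuous G := by
    exact (((hNcont.matrix_submatrix _ _).matrix_det).mul
      ((hNcont.matrix_submatrix _ _).matrix_det)).sub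
      (((hNcont.matrix_submatrix _ _).matrix_det).mul
      ((hNcont.matrix_submatrix _ _).matrix_det))
  have hblock : ∀ t : ℂ, (N t).submatrix (Sum.inl : κ → κ ⊕ Fin 2) Sum.inl =
      M.submatrix Sum.inl Sum.inl + t • 1 := by
    intro t
    ext x y
    by_cases hxy : x = y
    · subst hxy
      simp [hN, Matrix.one_apply_eq]
    · simp [hN, Matrix.one_apply_ne hxy,
        Matrix.one_apply_ne (fun h => hxy (Sum.inl_injective h))]
  set s : Set ℂ := {t | ((-(M.submatrix (Sum.inl : κ → κ ⊕ Fin 2) Sum.inl)).charpoly).eval t = 0}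
    with hs
  have hsfin : s.Finite := Polynomial.finite_setOf_isRoot
    (Matrix.charpoly_monic _).ne_zero
  have hdense : Dense sᶜ := hsfin.countable.dense_compl ℂ
  have heq : Set.EqOn F G sᶜ := by
    intro t ht
    have hdet : ((N t).submatrix Sum.inl Sum.inl).det ≠ 0 := by
      rw [hblock t, ← eval_charpoly_neg]
      exact ht
    exact dj_aux (N t) (isUnit_iff_ne_zero.mpr hdet)
  have hFG : F = G := hFc.ext_on hdense hGc heq
  have h0 : F 0 = G 0 := congrFun hFG 0
  simpa [hF, hG, hN] using h0

lemma herm_det_im {τ : Type*} [Fintype τ] [DecidableEq τ] {B : Matrix τ τ ℂ}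
    (hB : B.IsHermitian) : B.det.im = 0 := by
  have h2 : star B.det = B.det := by rw [← Matrix.det_conjTranspose, hB.eq]
  have h3 := congrArg Complex.im h2
  simp only [Complex.star_def, Complex.conj_im] at h3
  linarith

lemma key (M : Matrix (κ ⊕ Fin 2) (κ ⊕ Fin 2) ℂ) (hM : M.IsHermitian) :
    M.det.re * ((M.submatrix Sum.inl Sum.inl).det).re ≤
      ((M.submatrix (g 0) (g 0)).det).re * ((M.submatrix (g 1) (g 1)).det).re := by
  have h10 : M.submatrix (g 1) (g 0) = (M.submatrix (g 0) (g 1))ᴴ := by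
    ext x y
    rw [Matrix.conjTranspose_apply, Matrix.submatrix_apply, Matrix.submatrix_apply,
      hM.apply]
  have hdj := dj M
  have him0 : M.det.im = 0 := herm_det_im hM
  have himR : ((M.submatrix Sum.inl Sum.inl).det).im = 0 :=
    herm_det_im (hM.submatrix _)
  have himS : ((M.submatrix (g 0) (g 0)).det).im = 0 := herm_det_im (hM.submatrix _)
  have himT : ((M.submatrix (g 1) (g 1)).det).im = 0 := herm_det_im (hM.submatrix _)
  set c : ℂ := (M.submatrix (g 0) (g 1)).det with hc
  have h10det : (M.submatrix (g 1) (g 0)).det = (starRingEnd ℂ) c := by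
    rw [h10, Matrix.det_conjTranspose]; rfl
  rw [h10det, Complex.mul_conj] at hdj
  have hre := congrArg Complex.re hdj
  simp only [Complex.mul_re, Complex.sub_re, Complex.ofReal_re, him0, himR, himS, himT,
    mul_zero, zero_mul, sub_zero] at hre
  nlinarith [Complex.normSq_nonneg c]

lemma det_principalSub_eq {ι : Type*} [Fintype ι] [DecidableEq ι] (A : Matrix ι ι ℂ)
    (W : Finset ι) {β : Type*} [Fintype β] [DecidableEq β] (f : β → ι)
    (hinj : Function.Injective f) (hmem : ∀ b, f b ∈ W)
    (hsurj : ∀ w ∈ W, ∃ b, f b = w) :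
    (A.submatrix f f).det = (principalSub A W).det := by
  have hbij : Function.Bijective (fun b => (⟨f b, hmem b⟩ : {x // x ∈ W})) := by
    constructor
    · intro x y h
      exact hinj (congrArg Subtype.val h)
    · rintro ⟨w, hw⟩
      obtain ⟨b, hb⟩ := hsurj w hw
      exact ⟨b, Subtype.ext hb⟩
  let e : β ≃ {x // x ∈ W} := Equiv.ofBijective _ hbij
  rw [← Matrix.det_submatrix_equiv_self e (principalSub A W)]
  rfl

end Stmt18Aux

open Stmt18Aux in
theorem stmt18 (n : ℕ) (A : Matrix (Fin n) (Fin n) ℂ) (hA : A.IsHermitian)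
    (S T : Finset (Fin n))
    (hS : S.card = (S ∩ T).card + 1) (hT : T.card = (S ∩ T).card + 1) :
    (principalSub A (S ∪ T)).det.re * (principalSub A (S ∩ T)).det.re ≤
      (principalSub A S).det.re * (principalSub A T).det.re := by
  classical
  set R := S ∩ T with hR
  have hRS : R ⊆ S := Finset.inter_subset_left
  have hRT : R ⊆ T := Finset.inter_subset_right
  have hScard : (S \ R).card = 1 := by
    rw [Finset.card_sdiff_of_subset hRS]; omega
  have hTcard : (T \ R).card = 1 := by
    rw [Finset.card_sdiff_of_subset hRT]; omega
  obtain ⟨i, hi⟩ := Finset.card_eq_one.mp hScard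
  obtain ⟨j, hj⟩ := Finset.card_eq_one.mp hTcard
  have hiS : i ∈ S ∧ i ∉ R := by
    have : i ∈ S \ R := by rw [hi]; exact Finset.mem_singleton_self i
    exact Finset.mem_sdiff.mp this
  have hjT : j ∈ T ∧ j ∉ R := by
    have : j ∈ T \ R := by rw [hj]; exact Finset.mem_singleton_self j
    exact Finset.mem_sdiff.mp this
  have hij : i ≠ j := by
    intro h
    apply hiS.2
    rw [hR, Finset.mem_inter]
    exact ⟨hiS.1, h ▸ hjT.1⟩
  have hSins : S = insert i R := by
    rw [← Finset.sdiff_union_of_subset hRS, hi]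
    rw [Finset.insert_eq]
  have hTins : T = insert j R := by
    rw [← Finset.sdiff_union_of_subset hRT, hj]
    rw [Finset.insert_eq]
  have hU : S ∪ T = insert i (insert j R) := by
    rw [hSins, hTins, Finset.insert_union, Finset.union_insert, Finset.union_self]
  -- the embedding
  set emb : {x // x ∈ R} ⊕ Fin 2 → Fin n :=
    Sum.elim Subtype.val (fun k => if k = 0 then i else j) with hemb
  have hembinj : Function.Injective emb := by
    rintro (⟨x, hx⟩ | x) (⟨y, hy⟩ | y) h
    · simp only [hemb, Sum.elim_inl] at h
      simpa using h
    · exfalso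
      simp only [hemb, Sum.elim_inl, Sum.elim_inr] at h
      by_cases hy0 : y = 0
      · rw [hy0] at h; simp at h; exact hiS.2 (h ▸ hx)
      · rw [if_neg hy0] at h; exact hjT.2 (h ▸ hx)
    · exfalso
      simp only [hemb, Sum.elim_inl, Sum.elim_inr] at h
      by_cases hx0 : x = 0
      · rw [hx0] at h; simp at h; exact hiS.2 (h.symm ▸ hy)
      · rw [if_neg hx0] at h; exact hjT.2 (h.symm ▸ hy)
    · simp only [hemb, Sum.elim_inr] at h
      by_cases hx0 : x = 0 <;> by_cases hy0 : y = 0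
      · rw [hx0, hy0]
      · rw [if_pos hx0, if_neg hy0] at h; exact absurd h hij
      · rw [if_neg hx0, if_pos hy0] at h; exact absurd h.symm hij
      · congr 1; omega
  set M : Matrix ({x // x ∈ R} ⊕ Fin 2) ({x // x ∈ R} ⊕ Fin 2) ℂ :=
    A.submatrix emb emb with hMdef
  have hMherm : M.IsHermitian := hA.submatrix emb
  have hdetR : (M.submatrix Sum.inl Sum.inl).det = (principalSub A R).det := rfl
  have hdetU : M.det = (principalSub A (S ∪ T)).det := by
    apply det_principalSub_eq A (S ∪ T) emb hembinj
    · rintro (⟨x, hx⟩ | x)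
      · exact Finset.mem_union_left _ (hSins ▸ Finset.mem_insert_of_mem hx)
      · by_cases hx0 : x = 0
        · have hei : emb (Sum.inr x) = i := by simp [hemb, hx0]
          rw [hei]; exact Finset.mem_union_left _ hiS.1
        · have hej : emb (Sum.inr x) = j := by simp [hemb, hx0]
          rw [hej]; exact Finset.mem_union_right _ hjT.1
    · intro w hw
      rw [hU] at hw
      rcases Finset.mem_insert.mp hw with h | hw'
      · exact ⟨Sum.inr 0, by simp [hemb, h]⟩
      · rcases Finset.mem_insert.mp hw' with h | hw''
        · exact ⟨Sum.inr 1, by simp [hemb, h]⟩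
        · exact ⟨Sum.inl ⟨w, hw''⟩, rfl⟩
  have hdetS : (M.submatrix (g 0) (g 0)).det = (principalSub A S).det := by
    have : M.submatrix (g 0) (g 0) =
        A.submatrix (fun x => emb (g 0 x)) (fun x => emb (g 0 x)) := rfl
    rw [this]
    apply det_principalSub_eq A S _ (hembinj.comp (g_injective 0))
    · rintro (⟨x, hx⟩ | x)
      · exact hSins ▸ Finset.mem_insert_of_mem hx
      · have hei : emb (g 0 (Sum.inr x)) = i := by simp [hemb, g]
        rw [Function.comp_apply, hei]
        exact hSins ▸ Finset.mem_insert_self i R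
    · intro w hw
      rw [hSins] at hw
      rcases Finset.mem_insert.mp hw with h | hw'
      · exact ⟨Sum.inr ⟨⟩, by simp [hemb, g, h]⟩
      · exact ⟨Sum.inl ⟨w, hw'⟩, rfl⟩
  have hdetT : (M.submatrix (g 1) (g 1)).det = (principalSub A T).det := by
    have : M.submatrix (g 1) (g 1) =
        A.submatrix (fun x => emb (g 1 x)) (fun x => emb (g 1 x)) := rfl
    rw [this]
    apply det_principalSub_eq A T _ (hembinj.comp (g_injective 1))
    · rintro (⟨x, hx⟩ | x)
      · exact hTins ▸ Finset.mem_insert_of_mem hx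
      · have hej : emb (g 1 (Sum.inr x)) = j := by simp [hemb, g]
        rw [Function.comp_apply, hej]
        exact hTins ▸ Finset.mem_insert_self j R
    · intro w hw
      rw [hTins] at hw
      rcases Finset.mem_insert.mp hw with h | hw'
      · exact ⟨Sum.inr ⟨⟩, by simp [hemb, g, h]⟩
      · exact ⟨Sum.inl ⟨w, hw'⟩, rfl⟩
  have := key M hMherm
  rw [hdetR, hdetU, hdetS, hdetT] at this
  exact this
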